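/- For positive definite matrices A, B and t ∈ (0,1], the map X ↦ A ♮_t X is a bijection on the set of positive definite matrices. -/

import Mathlib

open scoped Matrix.Norms.L2Operator ComplexOrder

variable {n : Type*} [Fintype n] [DecidableEq n]

/-- Real power of a (Hermitian) matrix via the continuous functional calculus. -/
noncomputable def mpow (A : Matrix n n ℂ) (t : ℝ) : Matrix n n ℂ :=
  cfc (fun x : ℝ => x ^ t) A

/-- Matrix logarithm via the continuous functional calculus. -/
noncomputable def mlog (A : Matrix n n ℂ) : Matrix n n ℂ :=
  cfc Real.log A

/-- The geometric mean `A # B = A^{1/2} (A^{-1/2} B A^{-1/2})^{1/2} A^{1/2}`. -/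
noncomputable def geo (A B : Matrix n n ℂ) : Matrix n n ℂ :=
  mpow A (1/2) * mpow (mpow A (-(1/2)) * B * mpow A (-(1/2))) (1/2) * mpow A (1/2)

/-- The weighted geometric mean `A #ₜ B = A^{1/2} (A^{-1/2} B A^{-1/2})^t A^{1/2}`. -/
noncomputable def wgeo (t : ℝ) (A B : Matrix n n ℂ) : Matrix n n ℂ :=
  mpow A (1/2) * mpow (mpow A (-(1/2)) * B * mpow A (-(1/2))) t * mpow A (1/2)

/-- The weighted spectral geometric mean `A ♮ₜ B = (A⁻¹ # B)^t A (A⁻¹ # B)^t`. -/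
noncomputable def sgeo (t : ℝ) (A B : Matrix n n ℂ) : Matrix n n ℂ :=
  mpow (geo A⁻¹ B) t * A * mpow (geo A⁻¹ B) t

/-- Semi-metric `d(A,B) = 2 ‖log (A⁻¹ # B)‖` (operator norm). -/
noncomputable def dsm (A B : Matrix n n ℂ) : ℝ :=
  2 * ‖mlog (geo A⁻¹ B)‖

/-- Loewner order: `Loewner A B` means `A ≤ B`, i.e. `B - A` is positive semidefinite. -/
def Loewner (A B : Matrix n n ℂ) : Prop := (B - A).PosSemidef

namespace SGAux

open Matrix

lemma contOn {A : Matrix n n ℂ} (f : ℝ → ℝ) : ContinuousOn f (spectrum ℝ A) :=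
  Matrix.finite_real_spectrum.continuousOn f

lemma spec_pos {A : Matrix n n ℂ} (hA : A.PosDef) {x : ℝ} (hx : x ∈ spectrum ℝ A) : 0 < x := by
  rw [hA.isHermitian.spectrum_real_eq_range_eigenvalues] at hx
  obtain ⟨i, rfl⟩ := hx
  exact hA.eigenvalues_pos i

lemma posDef_conj {A : Matrix n n ℂ} (hA : A.PosDef) {B : Matrix n n ℂ} (hB : IsUnit B) :
    (Bᴴ * A * B).PosDef := by
  exact hA.conjTranspose_mul_mul_same (mulVec_injective_of_isUnit hB)

lemma posDef_conj' {A : Matrix n n ℂ} (hA : A.PosDef) {B : Matrix n n ℂ} (hB : IsUnit B) :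
    (B * A * Bᴴ).PosDef := by
  simpa only [conjTranspose_conjTranspose] using
    posDef_conj hA ((Matrix.isUnit_conjTranspose _).mpr hB)

/-- Conjugation by a positive definite (hence Hermitian, invertible) matrix. -/
lemma posDef_conj_pd {A P : Matrix n n ℂ} (hA : A.PosDef) (hP : P.PosDef) :
    (P * A * P).PosDef := by
  have := posDef_conj' hA hP.isUnit
  rwa [hP.isHermitian.eq] at this

lemma cfc_posDef {A : Matrix n n ℂ} (hA : A.PosDef) {f : ℝ → ℝ}
    (hf : ∀ x ∈ spectrum ℝ A, 0 < f x) : (cfc f A).PosDef := by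
  rw [Matrix.IsHermitian.cfc_eq hA.isHermitian f, Matrix.IsHermitian.cfc]
  refine posDef_conj' ?_ ?_
  · refine Matrix.PosDef.diagonal fun i => ?_
    have := hf _ (hA.isHermitian.eigenvalues_mem_spectrum_real i)
    simpa [Complex.zero_lt_real] using this
  · exact (Unitary.toUnits (hA.isHermitian.eigenvectorUnitary)).isUnit

lemma mpow_posDef {A : Matrix n n ℂ} (hA : A.PosDef) (t : ℝ) : (mpow A t).PosDef :=
  cfc_posDef hA fun x hx => Real.rpow_pos_of_pos (spec_pos hA hx) t

lemma mpow_one {A : Matrix n n ℂ} (hA : A.PosDef) : mpow A 1 = A := by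
  rw [mpow, cfc_congr (g := fun x : ℝ => x) (fun x _ => Real.rpow_one x)]
  exact cfc_id' ℝ A hA.isHermitian.isSelfAdjoint

lemma mpow_zero {A : Matrix n n ℂ} (hA : A.PosDef) : mpow A 0 = 1 := by
  rw [mpow, cfc_congr (g := fun _ : ℝ => (1:ℝ)) (fun x _ => Real.rpow_zero x)]
  exact cfc_one ℝ A hA.isHermitian.isSelfAdjoint

lemma mpow_add {A : Matrix n n ℂ} (hA : A.PosDef) (s r : ℝ) :
    mpow A (s + r) = mpow A s * mpow A r := by
  rw [mpow, mpow, mpow, ← cfc_mul _ _ A (contOn _) (contOn _)]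
  exact cfc_congr fun x hx => Real.rpow_add (spec_pos hA hx) s r

lemma mpow_mul {A : Matrix n n ℂ} (hA : A.PosDef) (s r : ℝ) :
    mpow (mpow A s) r = mpow A (s * r) := by
  rw [mpow, mpow, mpow,
    ← cfc_comp' (fun x : ℝ => x ^ r) (fun x : ℝ => x ^ s) A
      ((Matrix.finite_real_spectrum.image _).continuousOn _) (contOn _)
      hA.isHermitian.isSelfAdjoint]
  exact cfc_congr fun x hx => (Real.rpow_mul (spec_pos hA hx).le s r).symm

lemma mpow_neg_one {A : Matrix n n ℂ} (hA : A.PosDef) : mpow A (-1) = A⁻¹ := by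
  have h : mpow A (-1) * A = 1 := by
    have h0 := mpow_add hA (-1) 1
    rw [neg_add_cancel, mpow_zero hA, mpow_one hA] at h0
    exact h0.symm
  exact (Matrix.inv_eq_left_inv h).symm

lemma mpow_inv {A : Matrix n n ℂ} (hA : A.PosDef) (t : ℝ) : mpow A⁻¹ t = mpow A (-t) := by
  rw [← mpow_neg_one hA, mpow_mul hA, neg_one_mul]

lemma mpow_half_sq {A : Matrix n n ℂ} (hA : A.PosDef) :
    mpow A (1/2) * mpow A (1/2) = A := by
  rw [← mpow_add hA]
  norm_num
  exact mpow_one hA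

lemma geo_posDef {A B : Matrix n n ℂ} (hA : A.PosDef) (hB : B.PosDef) : (geo A B).PosDef := by
  have hP := mpow_posDef hA (1/2)
  have hQ := mpow_posDef hA (-(1/2))
  have hin : (mpow A (-(1/2)) * B * mpow A (-(1/2))).PosDef := posDef_conj_pd hB hQ
  have hS := mpow_posDef hin (1/2)
  unfold geo
  exact posDef_conj_pd hS hP

/-- Riccati: `(A⁻¹ # B) A (A⁻¹ # B) = B`. -/
lemma riccati {A B : Matrix n n ℂ} (hA : A.PosDef) (hB : B.PosDef) :
    geo A⁻¹ B * A * geo A⁻¹ B = B := by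
  set P := mpow A (-(1/2)) with hPdef
  set Q := mpow A (1/2) with hQdef
  have hQBQ : (Q * B * Q).PosDef := posDef_conj_pd hB (mpow_posDef hA (1/2))
  set S := mpow (Q * B * Q) (1/2) with hSdef
  have hgeo : geo A⁻¹ B = P * S * P := by
    unfold geo
    rw [mpow_inv hA, mpow_inv hA, neg_neg]
  have hSS : S * S = Q * B * Q := mpow_half_sq hQBQ
  have hPQ : P * Q = 1 := by
    have h0 := mpow_add hA (-(1/2)) (1/2)
    rw [neg_add_cancel, mpow_zero hA] at h0
    exact h0.symm
  have hQP : Q * P = 1 := by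
    have h0 := mpow_add hA (1/2) (-(1/2))
    rw [add_neg_cancel, mpow_zero hA] at h0
    exact h0.symm
  have hA_eq : A = Q * Q := (mpow_half_sq hA).symm
  rw [hgeo]
  calc P * S * P * A * (P * S * P)
      = P * (S * ((P * Q) * ((Q * P) * (S * P)))) := by
        rw [hA_eq]; simp only [Matrix.mul_assoc]
    _ = P * (S * (S * P)) := by rw [hPQ, hQP, one_mul, one_mul]
    _ = (P * Q) * (B * (Q * P)) := by
        rw [show S * (S * P) = (S * S) * P by rw [Matrix.mul_assoc], hSS]
        simp only [Matrix.mul_assoc]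
    _ = B := by rw [hPQ, hQP, one_mul, mul_one]

/-- Uniqueness in the Riccati equation. -/
lemma cancel {A M N : Matrix n n ℂ} (hA : A.PosDef) (hM : M.PosDef) (hN : N.PosDef)
    (h : M * A * M = N * A * N) : M = N := by
  set Q := mpow A (1/2) with hQdef
  have hQ := mpow_posDef hA (1/2)
  have hQQ : Q * Q = A := mpow_half_sq hA
  have hdet : IsUnit Q.det := (Matrix.isUnit_iff_isUnit_det Q).mp hQ.isUnit
  have hQi : Q⁻¹ * Q = 1 := Matrix.nonsing_inv_mul Q hdet
  have hQi' : Q * Q⁻¹ = 1 := Matrix.mul_nonsing_inv Q hdet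
  have hsqM : (Q * M * Q) * (Q * M * Q) = Q * (M * A * M) * Q := by
    rw [← hQQ]; simp only [Matrix.mul_assoc]
  have hsqN : (Q * N * Q) * (Q * N * Q) = Q * (N * A * N) * Q := by
    rw [← hQQ]; simp only [Matrix.mul_assoc]
  have hXY : Q * M * Q = Q * N * Q := by
    open scoped MatrixOrder in
    refine (CFC.sq_eq_sq_iff (A := Matrix n n ℂ) _ _ (posDef_conj_pd hM hQ).posSemidef.nonneg
      (posDef_conj_pd hN hQ).posSemidef.nonneg).mp ?_
    rw [pow_two, pow_two, hsqM, hsqN, h]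
  calc M = (Q⁻¹ * Q) * M * (Q * Q⁻¹) := by rw [hQi, hQi', one_mul, mul_one]
    _ = Q⁻¹ * ((Q * M * Q) * Q⁻¹) := by simp only [Matrix.mul_assoc]
    _ = Q⁻¹ * ((Q * N * Q) * Q⁻¹) := by rw [hXY]
    _ = (Q⁻¹ * Q) * N * (Q * Q⁻¹) := by simp only [Matrix.mul_assoc]
    _ = N := by rw [hQi, hQi', one_mul, mul_one]

lemma sgeo_eq {A X : Matrix n n ℂ} (t : ℝ) :
    sgeo t A X = mpow (geo A⁻¹ X) t * A * mpow (geo A⁻¹ X) t := rfl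

lemma sgeo_posDef {A X : Matrix n n ℂ} (hA : A.PosDef) (hX : X.PosDef) (t : ℝ) :
    (sgeo t A X).PosDef := by
  rw [sgeo_eq]
  exact posDef_conj_pd hA (mpow_posDef (geo_posDef hA.inv hX) t)

end SGAux

/-- for `t ∈ (0,1]` the map `X ↦ A ♮ₜ X` is a bijection on the
set of positive definite matrices. -/
theorem stmt8 (A B : Matrix n n ℂ) (hA : A.PosDef) (hB : B.PosDef)
    {t : ℝ} (ht : t ∈ Set.Ioc (0:ℝ) 1) :
    Set.BijOn (fun X => sgeo t A X) {X : Matrix n n ℂ | X.PosDef}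
      {X : Matrix n n ℂ | X.PosDef} := by
  open SGAux in
  obtain ⟨ht0, -⟩ := ht
  have hte : t * (1/t) = 1 := by field_simp
  have hte' : (1/t) * t = 1 := by field_simp
  refine ⟨fun X hX => sgeo_posDef hA hX t, ?_, ?_⟩
  · -- injectivity
    intro X hX Y hY hXY
    simp only [Set.mem_setOf_eq] at hX hY
    have hM := geo_posDef hA.inv hX
    have hN := geo_posDef hA.inv hY
    have h1 : mpow (geo A⁻¹ X) t = mpow (geo A⁻¹ Y) t := by
      refine cancel hA (mpow_posDef hM t) (mpow_posDef hN t) ?_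
      simpa only [sgeo_eq] using hXY
    have h2 : geo A⁻¹ X = geo A⁻¹ Y := by
      have e1 : geo A⁻¹ X = mpow (mpow (geo A⁻¹ X) t) (1/t) := by
        rw [mpow_mul hM, hte, mpow_one hM]
      have e2 : geo A⁻¹ Y = mpow (mpow (geo A⁻¹ Y) t) (1/t) := by
        rw [mpow_mul hN, hte, mpow_one hN]
      rw [e1, e2, h1]
    calc X = geo A⁻¹ X * A * geo A⁻¹ X := (riccati hA hX).symm
      _ = geo A⁻¹ Y * A * geo A⁻¹ Y := by rw [h2]
      _ = Y := riccati hA hY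
  · -- surjectivity
    intro C hC
    simp only [Set.mem_setOf_eq] at hC
    have hK := geo_posDef hA.inv hC
    set Nm := mpow (geo A⁻¹ C) (1/t) with hNmdef
    have hNm := mpow_posDef hK (1/t)
    have hXpd : (Nm * A * Nm).PosDef := posDef_conj_pd hA hNm
    refine ⟨Nm * A * Nm, hXpd, ?_⟩
    have hM := geo_posDef hA.inv hXpd
    have hMN : geo A⁻¹ (Nm * A * Nm) = Nm := cancel hA hM hNm (riccati hA hXpd)
    show sgeo t A (Nm * A * Nm) = C
    rw [sgeo_eq, hMN, hNmdef, mpow_mul hK, hte', mpow_one hK]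
    exact riccati hA hC
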